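/- If 𝓔 is a Bures contractive Schwarz channel on (A, τ) and ω ∈ ℂ with |ω| = 1 is an eigenvalue of 𝓔, then ω = 1. That is, the peripheral point spectrum of 𝓔 is {1}. -/

import Mathlib

open scoped ComplexOrder

/-- Fidelity F_τ(σ,ρ) = τ((ρ^{1/2} σ ρ^{1/2})^{1/2}) in a C*-algebra with trace τ. -/
noncomputable def cFid {A : Type*} [CStarAlgebra A] [PartialOrder A] [StarOrderedRing A]
    (τ : A →ₗ[ℂ] ℂ) (σ ρ : A) : ℝ :=
  (τ (CFC.sqrt (CFC.sqrt ρ * σ * CFC.sqrt ρ))).re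

/-- The Bures distance d_B(σ,ρ) = √(1 - F_τ(σ,ρ)). -/
noncomputable def cdB {A : Type*} [CStarAlgebra A] [PartialOrder A] [StarOrderedRing A]
    (τ : A →ₗ[ℂ] ℂ) (σ ρ : A) : ℝ :=
  Real.sqrt (1 - cFid τ σ ρ)

/-- Bures contractive: strictly decreases the Bures distance between distinct density
elements. -/
def IsBuresContractive {A : Type*} [CStarAlgebra A] [PartialOrder A] [StarOrderedRing A]
    (τ : A →ₗ[ℂ] ℂ) (E : A →ₗ[ℂ] A) : Prop :=
  ∀ σ ρ : A, 0 ≤ σ → 0 ≤ ρ → τ σ = 1 → τ ρ = 1 → σ ≠ ρ →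
    cdB τ (E σ) (E ρ) < cdB τ σ ρ

section Helpers

variable {A : Type*} [CStarAlgebra A] [PartialOrder A] [StarOrderedRing A]

lemma pps_one_nonneg : (0:A) ≤ 1 := by
  simpa using star_mul_self_nonneg (1:A)

lemma pps_algebraMap_nonneg {r : ℝ} (hr : 0 ≤ r) : (0:A) ≤ algebraMap ℝ A r := by
  rw [Algebra.algebraMap_eq_smul_one]
  exact smul_nonneg hr pps_one_nonneg

lemma pps_one_add_nonneg (w : A) (hw : IsSelfAdjoint w) (h1 : ‖w‖ ≤ 1) : 0 ≤ 1 + w := by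
  have h2 := hw.neg_algebraMap_norm_le_self
  calc (0:A) ≤ algebraMap ℝ A (1 - ‖w‖) := pps_algebraMap_nonneg (by linarith)
    _ ≤ 1 + w := by
        rw [map_sub, map_one]
        have := add_le_add_left h2 (1:A)
        simpa [sub_eq_add_neg] using this

lemma pps_smul_nonneg {a : A} (r : ℝ) (hr : 0 ≤ r) (ha : 0 ≤ a) : 0 ≤ (r : ℂ) • a := by
  rw [Complex.coe_smul]
  exact smul_nonneg hr ha

/-- If `0 ≤ R + t • W` for all real `t`, then `W = 0`. -/
lemma pps_zero_of_forall (R W : A) (h : ∀ t : ℝ, 0 ≤ R + (t:ℂ) • W) : W = 0 := by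
  have hR : 0 ≤ R := by simpa using h 0
  have key : ∀ t : ℝ, 0 < t → t * ‖W‖ ≤ 3 * ‖R‖ := by
    intro t ht
    have h1 : 0 ≤ R + (t:ℂ) • W := h t
    have h2 : 0 ≤ R + (-t:ℂ) • W := by simpa using h (-t)
    have h3 : R + (t:ℂ) • W ≤ R + R := by
      have hs : (t:ℂ) • W ≤ R := by
        rw [← sub_nonneg] at h2 ⊢
        convert h2 using 1
        module
      exact add_le_add (le_refl R) hs
    have h4 : ‖R + (t:ℂ) • W‖ ≤ ‖R + R‖ := CStarAlgebra.norm_le_norm_of_nonneg_of_le h1 h3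
    have h5 : ‖(t:ℂ) • W‖ ≤ ‖R + (t:ℂ) • W‖ + ‖R‖ := by
      have := norm_sub_le (R + (t:ℂ) • W) R
      simpa using this
    have h6 : ‖(t:ℂ) • W‖ = t * ‖W‖ := by
      rw [norm_smul]; simp [abs_of_pos ht]
    have h7 : ‖R + R‖ ≤ 2 * ‖R‖ := by
      calc ‖R + R‖ ≤ ‖R‖ + ‖R‖ := norm_add_le _ _
        _ = 2 * ‖R‖ := by ring
    linarith [h6 ▸ h5, h4.trans h7]
  by_contra hW0
  have hWpos : 0 < ‖W‖ := norm_pos_iff.mpr hW0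
  have := key ((3 * ‖R‖ + 1) / ‖W‖) (by positivity)
  rw [div_mul_cancel₀ _ (ne_of_gt hWpos)] at this
  linarith

lemma pps_tau_mono (τ : A →ₗ[ℂ] ℂ) (hpos : ∀ a : A, 0 ≤ a → 0 ≤ τ a) {a b : A} (hab : a ≤ b) :
    τ a ≤ τ b := by
  have := hpos _ (sub_nonneg.mpr hab)
  rw [map_sub] at this
  exact sub_nonneg.mp this

/-- For a selfadjoint element, τ w is real, with |Re (τ w)| ≤ Re (τ 1) * ‖w‖. -/
lemma pps_tau_bound (τ : A →ₗ[ℂ] ℂ) (hpos : ∀ a : A, 0 ≤ a → 0 ≤ τ a) (w : A)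
    (hw : IsSelfAdjoint w) : (τ w).im = 0 ∧ |(τ w).re| ≤ (τ 1).re * ‖w‖ := by
  have h1 : τ w ≤ τ (algebraMap ℝ A ‖w‖) := pps_tau_mono τ hpos hw.le_algebraMap_norm_self
  have h2 : τ (-(algebraMap ℝ A ‖w‖)) ≤ τ w := pps_tau_mono τ hpos hw.neg_algebraMap_norm_le_self
  rw [map_neg] at h2
  have halg : τ (algebraMap ℝ A ‖w‖) = (‖w‖ : ℂ) * τ 1 := by
    rw [Algebra.algebraMap_eq_smul_one, ← Complex.coe_smul, map_smul, smul_eq_mul]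
  rw [halg] at h1 h2
  have h01 : 0 ≤ τ 1 := hpos 1 pps_one_nonneg
  have him1 : (τ 1).im = 0 := by
    rw [Complex.le_def] at h01; simpa using h01.2.symm
  rw [Complex.le_def] at h1 h2
  obtain ⟨h1re, h1im⟩ := h1
  obtain ⟨h2re, h2im⟩ := h2
  simp only [Complex.mul_im, Complex.mul_re, Complex.ofReal_re, Complex.ofReal_im, him1,
    Complex.neg_im, Complex.neg_re] at h1re h1im h2re h2im
  constructor
  · rw [h1im]; ring
  · rw [abs_le]; constructor <;> nlinarith [norm_nonneg w]

lemma pps_poly_approx (K : ℝ) (ε : ℝ) (hε : 0 < ε) :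
    ∃ p : Polynomial ℝ, ∀ t ∈ Set.Icc (0:ℝ) K, |Real.sqrt t - p.eval t| ≤ ε := by
  set f : C(Set.Icc (0:ℝ) K, ℝ) :=
    ⟨fun t => Real.sqrt t, Real.continuous_sqrt.comp continuous_subtype_val⟩ with hf
  have hmem : f ∈ (polynomialFunctions (Set.Icc (0:ℝ) K)).topologicalClosure := by
    rw [polynomialFunctions_closure_eq_top]; trivial
  have hmem2 : f ∈ closure ((polynomialFunctions (Set.Icc (0:ℝ) K)) : Set C(Set.Icc (0:ℝ) K, ℝ)) :=
    hmem
  rw [Metric.mem_closure_iff] at hmem2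
  obtain ⟨g, hg, hdist⟩ := hmem2 ε hε
  rw [polynomialFunctions_coe] at hg
  obtain ⟨p, rfl⟩ := hg
  refine ⟨p, fun t ht => ?_⟩
  have := ContinuousMap.dist_apply_le_dist
    (f := f) (g := Polynomial.toContinuousMapOnAlgHom _ p) ⟨t, ht⟩
  have h2 := this.trans hdist.le
  simpa [Real.dist_eq, f] using h2

lemma pps_sqrt_cfc (a : A) (ha : 0 ≤ a) : CFC.sqrt a = cfc Real.sqrt a := by
  rw [CFC.sqrt_eq_cfc, cfc_nnreal_eq_real _ a ha]
  exact cfc_congr (fun x _ => by rw [Real.sqrt])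

lemma pps_tau_poly (τ : A →ₗ[ℂ] ℂ) (a a' : A) (ha : 0 ≤ a) (ha' : 0 ≤ a')
    (hm : ∀ k : ℕ, τ (a ^ k) = τ (a' ^ k)) (p : Polynomial ℝ) :
    τ (cfc p.eval a) = τ (cfc p.eval a') := by
  have hsa : IsSelfAdjoint a := .of_nonneg ha
  have hsa' : IsSelfAdjoint a' := .of_nonneg ha'
  rw [cfc_polynomial p a hsa, cfc_polynomial p a' hsa',
    Polynomial.aeval_eq_sum_range, Polynomial.aeval_eq_sum_range, map_sum, map_sum]
  refine Finset.sum_congr rfl fun i _ => ?_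
  rw [← Complex.coe_smul, ← Complex.coe_smul, map_smul, map_smul, hm i]

/-- Key analytic lemma: positive elements with matching moments have equal `τ ∘ sqrt`. -/
lemma pps_moment_sqrt [Nontrivial A] (τ : A →ₗ[ℂ] ℂ) (hpos : ∀ a : A, 0 ≤ a → 0 ≤ τ a)
    (a a' : A) (ha : 0 ≤ a) (ha' : 0 ≤ a')
    (hm : ∀ k : ℕ, τ (a ^ k) = τ (a' ^ k)) : τ (CFC.sqrt a) = τ (CFC.sqrt a') := by
  set K := max ‖a‖ ‖a'‖ with hK
  have hspec : ∀ t ∈ spectrum ℝ a, t ∈ Set.Icc (0:ℝ) K := fun t ht =>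
    ⟨spectrum_nonneg_of_nonneg ha ht,
     (Real.le_norm_self t).trans ((spectrum.norm_le_norm_of_mem ht).trans (le_max_left _ _))⟩
  have hspec' : ∀ t ∈ spectrum ℝ a', t ∈ Set.Icc (0:ℝ) K := fun t ht =>
    ⟨spectrum_nonneg_of_nonneg ha' ht,
     (Real.le_norm_self t).trans ((spectrum.norm_le_norm_of_mem ht).trans (le_max_right _ _))⟩
  set M := (τ 1).re with hM
  have hM0 : 0 ≤ M := by
    have := hpos 1 pps_one_nonneg
    rw [Complex.le_def] at this; simpa using this.1
  have key : ∀ ε : ℝ, 0 < ε → ‖τ (CFC.sqrt a) - τ (CFC.sqrt a')‖ ≤ 2 * M * ε := by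
    intro ε hε
    obtain ⟨p, hp⟩ := pps_poly_approx K ε hε
    have herr : ∀ b : A, (hb : 0 ≤ b) → (∀ t ∈ spectrum ℝ b, t ∈ Set.Icc (0:ℝ) K) →
        ‖τ (CFC.sqrt b) - τ (cfc p.eval b)‖ ≤ M * ε := by
      intro b hb hbs
      have hdiff : CFC.sqrt b - cfc p.eval b = cfc (fun t => Real.sqrt t - p.eval t) b := by
        rw [pps_sqrt_cfc b hb,
          cfc_sub Real.sqrt p.eval b Real.continuous_sqrt.continuousOn
            p.continuous_aeval.continuousOn]
      have hnorm : ‖cfc (fun t => Real.sqrt t - p.eval t) b‖ ≤ ε := by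
        refine norm_cfc_le hε.le fun t ht => ?_
        simpa [Real.norm_eq_abs] using hp t (hbs t ht)
      have hsa : IsSelfAdjoint (cfc (fun t => Real.sqrt t - p.eval t) b) := cfc_predicate _ _
      obtain ⟨him, hre⟩ := pps_tau_bound τ hpos _ hsa
      rw [← map_sub, hdiff]
      rw [Complex.norm_def, Complex.normSq_apply, him]
      calc Real.sqrt (_ * _ + 0 * 0) = |(τ (cfc (fun t => Real.sqrt t - p.eval t) b)).re| := by
            rw [mul_zero, add_zero, ← Real.sqrt_sq_eq_abs, sq]
        _ ≤ M * ‖cfc (fun t => Real.sqrt t - p.eval t) b‖ := hre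
        _ ≤ M * ε := mul_le_mul_of_nonneg_left hnorm hM0
    have hmid : τ (cfc p.eval a) = τ (cfc p.eval a') := pps_tau_poly τ a a' ha ha' hm p
    calc ‖τ (CFC.sqrt a) - τ (CFC.sqrt a')‖
        ≤ ‖τ (CFC.sqrt a) - τ (cfc p.eval a)‖ +
          ‖τ (cfc p.eval a') - τ (CFC.sqrt a')‖ := by
          rw [hmid]
          simpa using norm_sub_le_norm_sub_add_norm_sub (τ (CFC.sqrt a)) (τ (cfc p.eval a')) (τ (CFC.sqrt a'))
      _ ≤ M * ε + M * ε := by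
          refine add_le_add (herr a ha hspec) ?_
          rw [← norm_neg, neg_sub]
          exact herr a' ha' hspec'
      _ = 2 * M * ε := by ring
  by_contra hne
  have habs : 0 < ‖τ (CFC.sqrt a) - τ (CFC.sqrt a')‖ := by
    simpa [sub_eq_zero] using hne
  rcases eq_or_lt_of_le hM0 with hMz | hMp
  · have := key 1 one_pos
    rw [← hMz] at this
    simpa using absurd (le_antisymm (by linarith) habs.le) (ne_of_gt habs)
  · have := key (‖τ (CFC.sqrt a) - τ (CFC.sqrt a')‖ / (4 * M)) (by positivity)
    set D := ‖τ (CFC.sqrt a) - τ (CFC.sqrt a')‖ with hD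
    have h2 : 2 * M * (D / (4 * M)) = D / 2 := by field_simp; ring
    rw [h2] at this
    linarith

lemma pps_expand (c d : A) (z : ℂ) :
    star (c + z • d) * (c + z • d) = star c * c + z • (star c * d)
      + (starRingEnd ℂ) z • (star d * c) + ((starRingEnd ℂ) z * z) • (star d * d) := by
  simp only [star_add, star_smul, RCLike.star_def, mul_add, add_mul, smul_mul_assoc,
    mul_smul_comm, smul_smul]
  module

/-- Multiplicative domain property from Schwarz equality at an eigenvector. -/
lemma pps_mult_domain (E : A →ₗ[ℂ] A)
    (hSchwarz : ∀ x : A, star (E x) * E x ≤ E (star x * x))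
    (a : A) (μ : ℂ) (hμ : ‖μ‖ = 1) (heig : E a = μ • a)
    (heq : E (star a * a) = star a * a) (b : A) :
    E (star a * b) = (starRingEnd ℂ) μ • (star a * E b) := by
  have hμμ : (starRingEnd ℂ) μ * μ = 1 := by
    rw [mul_comm, Complex.mul_conj, Complex.normSq_eq_norm_sq, hμ]
    norm_num
  set S := E (star a * b) - (starRingEnd ℂ) μ • (star a * E b) with hS
  set T := E (star b * a) - μ • (star (E b) * a) with hT
  set R := E (star b * b) - star (E b) * E b with hR
  have key : ∀ lam : ℂ, 0 ≤ R + lam • T + (starRingEnd ℂ) lam • S := by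
    intro lam
    have h := hSchwarz (b + lam • a)
    rw [← sub_nonneg] at h
    convert h using 1
    have e2 : star (E (b + lam • a)) * E (b + lam • a)
        = star (E b) * E b + (lam * μ) • (star (E b) * a)
          + ((starRingEnd ℂ) lam * (starRingEnd ℂ) μ) • (star a * E b)
          + ((starRingEnd ℂ) lam * lam) • (star a * a) := by
      have hEb : E (b + lam • a) = E b + (lam * μ) • a := by
        rw [map_add, map_smul, heig, smul_smul]
      rw [hEb, pps_expand (E b) a (lam * μ), map_mul]
      have hc : (starRingEnd ℂ) lam * (starRingEnd ℂ) μ * (lam * μ)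
          = (starRingEnd ℂ) lam * lam := by
        rw [mul_mul_mul_comm, hμμ, mul_one]
      rw [hc]
    rw [e2, pps_expand b a lam, map_add, map_add, map_add, map_smul, map_smul, map_smul, heq,
      hR, hT, hS]
    module
  have hT1 : T + S = 0 := by
    apply pps_zero_of_forall R
    intro t
    have := key (t : ℂ)
    rw [Complex.conj_ofReal] at this
    convert this using 1
    module
  have hT2 : Complex.I • T - Complex.I • S = 0 := by
    apply pps_zero_of_forall R
    intro t
    have := key ((t : ℂ) * Complex.I)
    rw [map_mul, Complex.conj_I, Complex.conj_ofReal] at this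
    convert this using 1
    module
  have hTS : T = S := by
    have h0 : Complex.I • (T - S) = 0 := by rw [smul_sub]; exact hT2
    rcases smul_eq_zero.mp h0 with h | h
    · exact absurd h Complex.I_ne_zero
    · exact sub_eq_zero.mp h
  have hSzero : S = 0 := by
    have h2 : (2:ℂ) • S = 0 := by
      rw [two_smul]
      rw [hTS] at hT1
      exact hT1
    rcases smul_eq_zero.mp h2 with h | h
    · norm_num at h
    · exact h
  rw [← sub_eq_zero]
  exact hSzero

end Helpers

set_option maxHeartbeats 2000000 in
/-- the peripheral point spectrum of a Bures contractive Schwarz channel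
is {1}: any unimodular eigenvalue equals 1. -/
theorem peripheral_point_spectrum_trivial {A : Type*}
    [CStarAlgebra A] [PartialOrder A] [StarOrderedRing A]
    (τ : A →ₗ[ℂ] ℂ)
    (hpos : ∀ a : A, 0 ≤ a → 0 ≤ τ a)
    (hfaith : ∀ a : A, 0 ≤ a → τ a = 0 → a = 0)
    (htracial : ∀ x y : A, τ (x * y) = τ (y * x))
    (E : A →ₗ[ℂ] A)
    (hEtrace : ∀ x : A, τ (E x) = τ x)
    (hSchwarz : ∀ x : A, star (E x) * E x ≤ E (star x * x))
    (hBC : IsBuresContractive τ E)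
    (ω : ℂ) (hω : ‖ω‖ = 1) (x : A) (hx : x ≠ 0) (heig : E x = ω • x) :
    ω = 1 := by
  by_contra hne
  haveI : Nontrivial A := ⟨⟨x, 0, hx⟩⟩
  have hωω : (starRingEnd ℂ) ω * ω = 1 := by
    rw [mul_comm, Complex.mul_conj, Complex.normSq_eq_norm_sq, hω]
    norm_num
  have hωcn : ‖(starRingEnd ℂ) ω‖ = 1 := by rw [RCLike.norm_conj]; exact hω
  have hωc1 : (starRingEnd ℂ) ω ≠ 1 := by
    intro h
    apply hne
    have := congrArg (starRingEnd ℂ) h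
    rwa [Complex.conj_conj, map_one] at this
  -- τ 1 facts
  have hτ1nonneg : 0 ≤ τ 1 := hpos 1 pps_one_nonneg
  have hτ1im : (τ 1).im = 0 := by rw [Complex.le_def] at hτ1nonneg; simpa using hτ1nonneg.2.symm
  have hτ1ne : τ 1 ≠ 0 := fun h => one_ne_zero (hfaith 1 pps_one_nonneg h)
  have hT1eq : τ 1 = ((τ 1).re : ℂ) := Complex.ext rfl (by simpa using hτ1im)
  have hT1pos : 0 < (τ 1).re := by
    rcases lt_or_eq_of_le (by rw [Complex.le_def] at hτ1nonneg; simpa using hτ1nonneg.1 :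
      (0:ℝ) ≤ (τ 1).re) with h | h
    · exact h
    · exact absurd (by rw [hT1eq, ← h]; norm_num) hτ1ne
  -- E is positive
  have hEpos : ∀ a : A, 0 ≤ a → 0 ≤ E a := by
    intro a ha
    have h1 : star (CFC.sqrt a) * CFC.sqrt a = a := by
      rw [(IsSelfAdjoint.of_nonneg (CFC.sqrt_nonneg a)).star_eq, CFC.sqrt_mul_sqrt_self a ha]
    calc (0:A) ≤ star (E (CFC.sqrt a)) * E (CFC.sqrt a) := star_mul_self_nonneg _
      _ ≤ E (star (CFC.sqrt a) * CFC.sqrt a) := hSchwarz _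
      _ = E a := by rw [h1]
  -- E 1 = 1
  have hE1 : E 1 = 1 := by
    have h1 : star (E 1) * E 1 ≤ E 1 := by simpa using hSchwarz 1
    have h0 : (0:A) ≤ star (E 1) * E 1 := star_mul_self_nonneg _
    have hu0 : (0:A) ≤ E 1 := le_trans h0 h1
    have hnormsq : ‖E 1‖ * ‖E 1‖ ≤ ‖E 1‖ := by
      have := CStarAlgebra.norm_le_norm_of_nonneg_of_le h0 h1
      rwa [CStarRing.norm_star_mul_self] at this
    have hnorm1 : ‖E 1‖ ≤ 1 := by nlinarith [norm_nonneg (E 1)]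
    have hle1 : E 1 ≤ 1 := (CStarAlgebra.norm_le_one_iff_of_nonneg _ hu0).mp hnorm1
    have hzero : τ (1 - E 1) = 0 := by rw [map_sub, hEtrace 1, sub_self]
    have h5 := hfaith _ (sub_nonneg.mpr hle1) hzero
    rw [sub_eq_zero] at h5
    exact h5.symm
  -- Schwarz equality at x
  have hxsx : star (E x) * E x = star x * x := by
    rw [heig]
    calc star (ω • x) * (ω • x) = (ω * (starRingEnd ℂ) ω) • (star x * x) := by
          simp [star_smul, RCLike.star_def, smul_mul_assoc, mul_smul_comm, smul_smul]
      _ = star x * x := by rw [mul_comm, hωω, one_smul]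
  have hfix1 : E (star x * x) = star x * x := by
    have hle : star x * x ≤ E (star x * x) := hxsx ▸ hSchwarz x
    have hz : τ (E (star x * x) - star x * x) = 0 := by rw [map_sub, hEtrace, sub_self]
    have h5 := hfaith _ (sub_nonneg.mpr hle) hz
    rw [sub_eq_zero] at h5
    exact h5
  have L1 : ∀ b, E (star x * b) = (starRingEnd ℂ) ω • (star x * E b) :=
    pps_mult_domain E hSchwarz x ω hω heig hfix1
  have hEstar : E (star x) = (starRingEnd ℂ) ω • star x := by
    have h5 := L1 1
    rwa [mul_one, hE1, mul_one] at h5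
  have hxxs : star (E (star x)) * E (star x) = x * star x := by
    rw [hEstar]
    calc star ((starRingEnd ℂ) ω • star x) * ((starRingEnd ℂ) ω • star x)
        = ((starRingEnd ℂ) ω * ω) • (x * star x) := by
          simp [star_smul, RCLike.star_def, smul_mul_assoc, mul_smul_comm, smul_smul,
            Complex.conj_conj]
      _ = x * star x := by rw [hωω, one_smul]
  have hfix2 : E (x * star x) = x * star x := by
    have hle : x * star x ≤ E (x * star x) := by
      have h5 := hSchwarz (star x)
      rw [hxxs, star_star] at h5
      exact h5
    have hz : τ (E (x * star x) - x * star x) = 0 := by rw [map_sub, hEtrace, sub_self]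
    have h5 := hfaith _ (sub_nonneg.mpr hle) hz
    rw [sub_eq_zero] at h5
    exact h5
  have L2 : ∀ b, E (x * b) = ω • (x * E b) := by
    intro b
    have h5 := pps_mult_domain E hSchwarz (star x) ((starRingEnd ℂ) ω) hωcn hEstar
      (by rw [star_star]; exact hfix2) b
    rwa [star_star, Complex.conj_conj] at h5
  -- word lemma
  have hword : ∀ j m : ℕ, E (x ^ j * (star x) ^ m)
      = (ω ^ j * ((starRingEnd ℂ) ω) ^ m) • (x ^ j * (star x) ^ m) := by
    have hbase : ∀ m : ℕ, E ((star x) ^ m) = ((starRingEnd ℂ) ω) ^ m • (star x) ^ m := by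
      intro m
      induction m with
      | zero => simpa using hE1
      | succ n ih =>
        rw [pow_succ', L1, ih, mul_smul_comm, smul_smul, ← pow_succ']
    intro j m
    induction j with
    | zero => simpa using hbase m
    | succ n ih =>
      have hxp : x ^ (n + 1) * (star x) ^ m = x * (x ^ n * (star x) ^ m) := by
        rw [pow_succ', mul_assoc]
      rw [hxp, L2, ih, mul_smul_comm, smul_smul, ← hxp]
      congr 1
      ring
  -- commutation of x and star x from uniqueness of fixed densities
  have htpos : 0 ≤ τ (star x * x) := hpos _ (star_mul_self_nonneg x)
  have htim : (τ (star x * x)).im = 0 := by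
    rw [Complex.le_def] at htpos; simpa using htpos.2.symm
  have htne : τ (star x * x) ≠ 0 := by
    intro h
    exact hx ((CStarRing.star_mul_self_eq_zero_iff x).mp
      (hfaith _ (star_mul_self_nonneg x) h))
  have hteq : τ (star x * x) = (((τ (star x * x)).re : ℝ) : ℂ) :=
    Complex.ext rfl (by simpa using htim)
  have htrpos : 0 < (τ (star x * x)).re := by
    rcases lt_or_eq_of_le (by rw [Complex.le_def] at htpos; simpa using htpos.1 :
      (0:ℝ) ≤ (τ (star x * x)).re) with h | h
    · exact h
    · exact absurd (by rw [hteq, ← h]; norm_num) htne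
  have hcomm : x * star x = star x * x := by
    by_contra hcne
    set tr : ℝ := (τ (star x * x)).re with htr
    have h1pos : 0 ≤ ((tr⁻¹ : ℝ) : ℂ) • (star x * x) :=
      pps_smul_nonneg _ (by positivity) (star_mul_self_nonneg x)
    have h2pos : 0 ≤ ((tr⁻¹ : ℝ) : ℂ) • (x * star x) :=
      pps_smul_nonneg _ (by positivity) (mul_star_self_nonneg x)
    have hτ1' : τ (((tr⁻¹ : ℝ) : ℂ) • (star x * x)) = 1 := by
      rw [map_smul, smul_eq_mul, hteq, ← Complex.ofReal_mul,
        inv_mul_cancel₀ (ne_of_gt htrpos), Complex.ofReal_one]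
    have hτ2' : τ (((tr⁻¹ : ℝ) : ℂ) • (x * star x)) = 1 := by
      rw [map_smul, smul_eq_mul, htracial x (star x), hteq, ← Complex.ofReal_mul,
        inv_mul_cancel₀ (ne_of_gt htrpos), Complex.ofReal_one]
    have hEfix1 : E (((tr⁻¹ : ℝ) : ℂ) • (star x * x)) = ((tr⁻¹ : ℝ) : ℂ) • (star x * x) := by
      rw [map_smul, hfix1]
    have hEfix2 : E (((tr⁻¹ : ℝ) : ℂ) • (x * star x)) = ((tr⁻¹ : ℝ) : ℂ) • (x * star x) := by
      rw [map_smul, hfix2]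
    have hσne : ((tr⁻¹ : ℝ) : ℂ) • (star x * x) ≠ ((tr⁻¹ : ℝ) : ℂ) • (x * star x) := by
      intro h
      have := smul_right_injective A
        (by exact_mod_cast inv_ne_zero (ne_of_gt htrpos) : ((tr⁻¹ : ℝ) : ℂ) ≠ 0) h
      exact hcne this.symm
    have hlt := hBC _ _ h1pos h2pos hτ1' hτ2' hσne
    rw [hEfix1, hEfix2] at hlt
    exact lt_irrefl _ hlt
  have hcommute : Commute x (star x) := hcomm
  -- τ x = τ (star x) = 0
  have hτx : τ x = 0 := by
    have h5 := hEtrace x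
    rw [heig, map_smul, smul_eq_mul] at h5
    have h6 : (ω - 1) * τ x = 0 := by linear_combination h5
    rcases mul_eq_zero.mp h6 with h | h
    · exact absurd (by linear_combination h : ω = 1) hne
    · exact h
  have hτxs : τ (star x) = 0 := by
    have h5 := hEtrace (star x)
    rw [hEstar, map_smul, smul_eq_mul] at h5
    have h6 : ((starRingEnd ℂ) ω - 1) * τ (star x) = 0 := by linear_combination h5
    rcases mul_eq_zero.mp h6 with h | h
    · exact absurd (by linear_combination h : (starRingEnd ℂ) ω = 1) hωc1
    · exact h
  -- choose the phase z
  obtain ⟨z, hvne⟩ : ∃ z : ℂ, z • x + (starRingEnd ℂ) z • star x ≠ 0 := by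
    by_cases h1 : (1:ℂ) • x + ((starRingEnd ℂ) (1:ℂ)) • star x ≠ 0
    · exact ⟨1, h1⟩
    · push_neg at h1
      refine ⟨Complex.I, fun h2 => hx ?_⟩
      rw [map_one, one_smul, one_smul] at h1
      have hs : star x = -x := by linear_combination (norm := module) h1
      rw [Complex.conj_I, hs] at h2
      have h3 : ((2:ℂ) * Complex.I) • x = 0 := by
        rw [mul_smul, two_smul]
        linear_combination (norm := module) h2
      rcases smul_eq_zero.mp h3 with h | h
      · exact absurd h (by simp [Complex.ext_iff])
      · exact h
  -- the selfadjoint perturbation v and its image v'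
  have hvsa : IsSelfAdjoint (z • x + (starRingEnd ℂ) z • star x) := by
    rw [IsSelfAdjoint]
    simp only [star_add, star_smul, RCLike.star_def, Complex.conj_conj, star_star]
    exact add_comm _ _
  have hEv : E (z • x + (starRingEnd ℂ) z • star x)
      = (ω * z) • x + (starRingEnd ℂ) (ω * z) • star x := by
    rw [map_add, map_smul, map_smul, heig, hEstar, smul_smul, smul_smul, map_mul]
    module
  have hv'sa : IsSelfAdjoint ((ω * z) • x + (starRingEnd ℂ) (ω * z) • star x) := by
    rw [IsSelfAdjoint]
    simp only [star_add, star_smul, RCLike.star_def, Complex.conj_conj, star_star]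
    exact add_comm _ _
  -- cast helper
  have hcast : ∀ (u : A) (C : ℕ), τ (u * (C : A)) = (C : ℂ) * τ u := by
    intro u C
    rw [← (Nat.cast_commute (C : ℕ) u).eq, ← nsmul_eq_mul, map_nsmul, nsmul_eq_mul]
  -- invariance of word traces
  have hwt : ∀ m n : ℕ, (ω ^ m * ((starRingEnd ℂ) ω) ^ n) * τ (x ^ m * (star x) ^ n)
      = τ (x ^ m * (star x) ^ n) := by
    intro m n
    have h5 := hEtrace (x ^ m * (star x) ^ n)
    rw [hword m n, map_smul, smul_eq_mul] at h5
    exact h5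
  -- per-term computation
  have hterm : ∀ (c : ℂ) (m n C : ℕ),
      τ ((c • x) ^ m * ((starRingEnd ℂ) c • star x) ^ n * (C : A))
      = (c ^ m * ((starRingEnd ℂ) c) ^ n * (C : ℂ)) * τ (x ^ m * (star x) ^ n) := by
    intro c m n C
    have h1 : (c • x) ^ m * ((starRingEnd ℂ) c • star x) ^ n * (C : A)
        = (c ^ m * ((starRingEnd ℂ) c) ^ n) • (x ^ m * (star x) ^ n * (C : A)) := by
      rw [smul_pow, smul_pow, smul_mul_assoc, mul_smul_comm, smul_smul, smul_mul_assoc]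
    rw [h1, map_smul, smul_eq_mul, hcast]
    ring
  -- moments agree
  have hmom : ∀ k : ℕ, τ (((ω * z) • x + (starRingEnd ℂ) (ω * z) • star x) ^ k)
      = τ ((z • x + (starRingEnd ℂ) z • star x) ^ k) := by
    intro k
    have hc1 : Commute (z • x) ((starRingEnd ℂ) z • star x) :=
      (hcommute.smul_left z).smul_right _
    have hc2 : Commute ((ω * z) • x) ((starRingEnd ℂ) (ω * z) • star x) :=
      (hcommute.smul_left _).smul_right _
    rw [hc1.add_pow, hc2.add_pow, map_sum, map_sum]
    refine Finset.sum_congr rfl fun m _ => ?_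
    rw [hterm (ω * z) m (k - m) _, hterm z m (k - m) _]
    have h2 : (ω * z) ^ m * ((starRingEnd ℂ) (ω * z)) ^ (k - m) * ((k.choose m : ℕ) : ℂ)
        = (z ^ m * ((starRingEnd ℂ) z) ^ (k - m) * ((k.choose m : ℕ) : ℂ))
          * (ω ^ m * ((starRingEnd ℂ) ω) ^ (k - m)) := by
      rw [map_mul]; ring
    rw [h2, mul_assoc, hwt m (k - m), mul_assoc]
  set v : A := z • x + (starRingEnd ℂ) z • star x with hvdef
  set v' : A := (ω * z) • x + (starRingEnd ℂ) (ω * z) • star x with hv'def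
  set δ : ℝ := (2 * (1 + ‖v‖))⁻¹ with hδdef
  have hδpos : 0 < δ := by rw [hδdef]; positivity
  have hδnorm : δ * ‖v‖ ≤ 1 := by
    have h1 : (2 * (1 + ‖v‖))⁻¹ * (2 * (1 + ‖v‖)) = 1 := inv_mul_cancel₀ (by positivity)
    have h2 : ‖v‖ ≤ 2 * (1 + ‖v‖) := by nlinarith [norm_nonneg v]
    have h3 := mul_le_mul_of_nonneg_left h2 hδpos.le
    rw [hδdef] at *
    linarith [h3, h1]
  set w : A := (δ : ℂ) • v with hwdef
  set w' : A := (δ : ℂ) • v' with hw'def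
  have hEw : E w = w' := by rw [hwdef, map_smul, hEv]
  have hwsa : IsSelfAdjoint w := by
    rw [hwdef, IsSelfAdjoint, star_smul]
    simp only [RCLike.star_def, Complex.conj_ofReal]
    rw [hvsa.star_eq]
  have hwnorm : ‖w‖ ≤ 1 := by
    rw [hwdef, norm_smul]
    simpa [abs_of_pos hδpos] using hδnorm
  have hg1 : 0 ≤ 1 + w := pps_one_add_nonneg w hwsa hwnorm
  have hg2 : 0 ≤ 1 + w' := by
    have h5 : (1:A) + w' = E (1 + w) := by rw [map_add, hE1, hEw]
    rw [h5]; exact hEpos _ hg1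
  have hτv : τ v = 0 := by rw [hvdef, map_add, map_smul, map_smul, hτx, hτxs]; simp
  have hτv' : τ v' = 0 := by rw [hv'def, map_add, map_smul, map_smul, hτx, hτxs]; simp
  have hτw : τ w = 0 := by rw [hwdef, map_smul, hτv, smul_zero]
  set cr : ℝ := ((τ 1).re)⁻¹ with hcrdef
  have hcrpos : 0 < cr := by rw [hcrdef]; positivity
  have hρpos : 0 ≤ (cr : ℂ) • (1 : A) := pps_smul_nonneg cr hcrpos.le pps_one_nonneg
  have hσpos : 0 ≤ (cr : ℂ) • ((1 : A) + w) := pps_smul_nonneg cr hcrpos.le hg1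
  have hτρ : τ ((cr : ℂ) • (1 : A)) = 1 := by
    rw [map_smul, smul_eq_mul, hT1eq, hcrdef, ← Complex.ofReal_mul,
      inv_mul_cancel₀ (ne_of_gt hT1pos), Complex.ofReal_one]
  have hτσ : τ ((cr : ℂ) • ((1:A) + w)) = 1 := by
    rw [map_smul, map_add, hτw, add_zero, smul_eq_mul, hT1eq, hcrdef, ← Complex.ofReal_mul,
      inv_mul_cancel₀ (ne_of_gt hT1pos), Complex.ofReal_one]
  have hσneρ : (cr : ℂ) • ((1:A) + w) ≠ (cr : ℂ) • (1 : A) := by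
    intro h
    have h2 := smul_right_injective A
      (by exact_mod_cast ne_of_gt hcrpos : ((cr : ℝ) : ℂ) ≠ 0) h
    have h3 : w = 0 := by linear_combination (norm := module) h2
    rw [hwdef] at h3
    rcases smul_eq_zero.mp h3 with h4 | h4
    · exact absurd (by exact_mod_cast h4) (ne_of_gt hδpos)
    · exact hvne h4
  have hlt := hBC _ _ hσpos hρpos hτσ hτρ hσneρ
  have hEρ : E ((cr : ℂ) • (1:A)) = (cr : ℂ) • (1:A) := by rw [map_smul, hE1]
  have hEσ : E ((cr : ℂ) • ((1:A) + w)) = (cr : ℂ) • ((1:A) + w') := by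
    rw [map_smul, map_add, hE1, hEw]
  rw [hEρ, hEσ] at hlt
  have hsq1 : 0 ≤ ((Real.sqrt cr : ℝ) : ℂ) • (1:A) :=
    pps_smul_nonneg _ (Real.sqrt_nonneg cr) pps_one_nonneg
  have hsqrtρ : CFC.sqrt ((cr : ℂ) • (1:A)) = ((Real.sqrt cr : ℝ) : ℂ) • (1:A) := by
    apply CFC.sqrt_unique
    · rw [smul_mul_assoc, mul_smul_comm, smul_smul, mul_one, ← Complex.ofReal_mul,
        Real.mul_self_sqrt hcrpos.le]
    · exact hsq1
  have hss : Real.sqrt cr * cr * Real.sqrt cr = cr * cr := by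
    rw [mul_comm (Real.sqrt cr) cr, mul_assoc, Real.mul_self_sqrt hcrpos.le]
  have hmid : ∀ g : A, CFC.sqrt ((cr : ℂ) • (1:A)) * ((cr : ℂ) • g)
      * CFC.sqrt ((cr : ℂ) • (1:A)) = ((cr * cr : ℝ) : ℂ) • g := by
    intro g
    rw [hsqrtρ, smul_mul_smul_comm, smul_mul_smul_comm, one_mul, mul_one]
    congr 1
    push_cast [← hss]
    ring
  have hkey : τ (CFC.sqrt (((cr * cr : ℝ) : ℂ) • ((1:A) + w')))
      = τ (CFC.sqrt (((cr * cr : ℝ) : ℂ) • ((1:A) + w))) := by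
    apply pps_moment_sqrt τ hpos _ _
      (pps_smul_nonneg _ (by positivity) hg2) (pps_smul_nonneg _ (by positivity) hg1)
    intro k
    rw [smul_pow, smul_pow, map_smul, map_smul]
    congr 1
    rw [(Commute.one_left w').add_pow, (Commute.one_left w).add_pow, map_sum, map_sum]
    refine Finset.sum_congr rfl fun m _ => ?_
    simp only [one_pow, one_mul]
    rw [hcast, hcast]
    congr 1
    rw [hwdef, hw'def, smul_pow, smul_pow, map_smul, map_smul, hmom]
  have hfid : cFid τ ((cr : ℂ) • ((1:A) + w')) ((cr : ℂ) • (1:A))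
      = cFid τ ((cr : ℂ) • ((1:A) + w)) ((cr : ℂ) • (1:A)) := by
    rw [cFid, cFid, hmid (1 + w'), hmid (1 + w), hkey]
  rw [cdB, cdB, hfid] at hlt
  exact lt_irrefl _ hlt
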